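/- In S = (IO∞(ℤ))ⁿ, if 𝔠 is a congruence and α, β are distinct 𝔠-equivalent elements, then 𝕀 𝔠 ε for every idempotent ε ∈ S satisfying D(𝕀,ε) = D(α,β). -/

import Mathlib

/-- A partial injective self-map of ℤ (encoded as a `PEquiv`) is monotone. -/
def PMono (f : ℤ ≃. ℤ) : Prop :=
  ∀ x y a b : ℤ, a ∈ f x → b ∈ f y → x ≤ y → a ≤ b

/-- Domain of a partial injective self-map of ℤ. -/
def PDom (f : ℤ ≃. ℤ) : Set ℤ := {x | (f x).isSome}

/-- Range of a partial injective self-map of ℤ. -/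
def PRan (f : ℤ ≃. ℤ) : Set ℤ := {y | (f.symm y).isSome}

/-- Membership in IO∞(ℤ): injective (built into `PEquiv`), monotone,
with cofinite domain and cofinite range. -/
def IOZ (f : ℤ ≃. ℤ) : Prop :=
  PMono f ∧ (PDom f)ᶜ.Finite ∧ (PRan f)ᶜ.Finite

/-- Idempotent element of IO∞(ℤ). -/
def IsIdem (ε : ℤ ≃. ℤ) : Prop := ε.trans ε = ε

/-- Membership in the direct power (IO∞(ℤ))ⁿ. -/
def IOZn (n : ℕ) (α : Fin n → ℤ ≃. ℤ) : Prop := ∀ i, IOZ (α i)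

/-- Coordinatewise composition on the direct power (α then β, as in the paper). -/
def mulN {n : ℕ} (α β : Fin n → ℤ ≃. ℤ) : Fin n → ℤ ≃. ℤ := fun i => (α i).trans (β i)

/-- The identity 𝕀 of (IO∞(ℤ))ⁿ. -/
def oneN (n : ℕ) : Fin n → ℤ ≃. ℤ := fun _ => PEquiv.refl ℤ

/-- εᵢ°: the tuple with ε in coordinate i and identities elsewhere. -/
def epsT {n : ℕ} (i : Fin n) (ε : ℤ ≃. ℤ) : Fin n → ℤ ≃. ℤ :=
  fun j => if j = i then ε else PEquiv.refl ℤ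

/-- A congruence on the semigroup (IO∞(ℤ))ⁿ (relative to the carrier `IOZn n`). -/
def IsCongOn (n : ℕ) (ρ : (Fin n → ℤ ≃. ℤ) → (Fin n → ℤ ≃. ℤ) → Prop) : Prop :=
  (∀ α, IOZn n α → ρ α α) ∧
  (∀ α β, IOZn n α → IOZn n β → ρ α β → ρ β α) ∧
  (∀ α β γ, IOZn n α → IOZn n β → IOZn n γ → ρ α β → ρ β γ → ρ α γ) ∧
  (∀ α β γ, IOZn n α → IOZn n β → IOZn n γ → ρ α β →
    ρ (mulN α γ) (mulN β γ) ∧ ρ (mulN γ α) (mulN γ β))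

/-- The congruence σ_[i]. -/
def sigmaI (n : ℕ) (i : Fin n) (α β : Fin n → ℤ ≃. ℤ) : Prop :=
  ∃ ε : ℤ ≃. ℤ, IOZ ε ∧ IsIdem ε ∧ mulN α (epsT i ε) = mulN β (epsT i ε)

/-- D(α,β): the set of coordinates where α and β differ. -/
def Dset {n : ℕ} (α β : Fin n → ℤ ≃. ℤ) : Set (Fin n) := {i | α i ≠ β i}

/-- Idempotent tuple. -/
def IsIdemN {n : ℕ} (ε : Fin n → ℤ ≃. ℤ) : Prop := ∀ i, (ε i).trans (ε i) = ε i

/-- σ_[i₁,…,i_k] for the set of indices t: α and β agree after right multiplication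
by a product ε°_{i₁}⋯ε°_{i_k} of idempotents supported on t. -/
def sigmaSet (n : ℕ) (t : Finset (Fin n)) (α β : Fin n → ℤ ≃. ℤ) : Prop :=
  ∃ ε : Fin n → ℤ ≃. ℤ, IOZn n ε ∧ IsIdemN ε ∧ (∀ i ∉ t, ε i = PEquiv.refl ℤ) ∧
    mulN α ε = mulN β ε

/-! ### Auxiliary development -/

open PEquiv Option Set
open scoped Classical

/-- partial identity on a set -/
noncomputable def pid (s : Set ℤ) : ℤ ≃. ℤ where
  toFun a := if a ∈ s then some a else none
  invFun a := if a ∈ s then some a else none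
  inv a b := by
    split_ifs with hb ha ha
    · simp [eq_comm]
    · simp [ne_of_mem_of_not_mem hb ha]
    · simp [ne_of_mem_of_not_mem ha hb]
    · simp

@[simp] theorem pid_apply (s : Set ℤ) (x : ℤ) : pid s x = if x ∈ s then some x else none := rfl
@[simp] theorem pid_symm (s : Set ℤ) : (pid s).symm = pid s := rfl

theorem pid_eq_some_iff {s : Set ℤ} {x y : ℤ} : pid s x = some y ↔ x = y ∧ x ∈ s := by
  rw [pid_apply]
  split_ifs with h
  · constructor
    · rintro h'; cases h'; exact ⟨rfl, h⟩
    · rintro ⟨rfl, _⟩; rfl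
  · constructor
    · rintro ⟨⟩
    · rintro ⟨rfl, h'⟩; exact absurd h' h

theorem pid_trans_pid (s t : Set ℤ) : (pid s).trans (pid t) = pid (s ∩ t) := by
  apply PEquiv.ext; intro x
  show (pid s x).bind (pid t) = _
  by_cases hs : x ∈ s <;> by_cases ht : x ∈ t <;>
    simp [hs, ht, Set.mem_inter_iff]

theorem pid_univ : pid Set.univ = PEquiv.refl ℤ := by
  apply PEquiv.ext; intro x; simp [PEquiv.refl]

theorem pid_idem (s : Set ℤ) : (pid s).trans (pid s) = pid s := by
  rw [pid_trans_pid, Set.inter_self]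

theorem pid_ne_refl {s : Set ℤ} {x : ℤ} (hx : x ∉ s) : pid s ≠ PEquiv.refl ℤ := by
  intro h
  have := congrArg (fun f : ℤ ≃. ℤ => f x) h
  simp [hx, PEquiv.refl] at this

theorem pid_mono (s : Set ℤ) : PMono (pid s) := by
  intro x y a b ha hb hxy
  rw [Option.mem_def, pid_eq_some_iff] at ha hb
  rw [← ha.1, ← hb.1]; exact hxy

theorem PDom_pid (s : Set ℤ) : PDom (pid s) = s := by
  ext x; simp only [PDom, Set.mem_setOf_eq, pid_apply]
  split_ifs with h <;> simp [h]

theorem IOZ_pid {s : Set ℤ} (hs : sᶜ.Finite) : IOZ (pid s) := by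
  refine ⟨pid_mono s, ?_, ?_⟩
  · rw [PDom_pid]; exact hs
  · show (PDom (pid s).symm)ᶜ.Finite
    rw [pid_symm, PDom_pid]; exact hs

theorem IOZ_refl : IOZ (PEquiv.refl ℤ) := by
  rw [← pid_univ]; exact IOZ_pid (by simp)
@[simp] theorem trans_apply' (f g : ℤ ≃. ℤ) (x : ℤ) : (f.trans g) x = (f x).bind g := rfl

theorem mem_PDom_iff {f : ℤ ≃. ℤ} {x : ℤ} : x ∈ PDom f ↔ ∃ y, f x = some y := by
  simp [PDom, Option.isSome_iff_exists]

theorem mem_PRan_iff {f : ℤ ≃. ℤ} {y : ℤ} : y ∈ PRan f ↔ ∃ x, f x = some y := by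
  simp only [PRan, Set.mem_setOf_eq, Option.isSome_iff_exists]
  constructor
  · rintro ⟨x, hx⟩; exact ⟨x, (f.eq_some_iff).1 hx⟩
  · rintro ⟨x, hx⟩; exact ⟨x, (f.eq_some_iff).2 hx⟩

theorem PDom_symm (f : ℤ ≃. ℤ) : PDom f.symm = PRan f := rfl
theorem PRan_symm (f : ℤ ≃. ℤ) : PRan f.symm = PDom f := rfl

theorem PMono_symm {f : ℤ ≃. ℤ} (hf : PMono f) : PMono f.symm := by
  intro x y a b ha hb hxy
  rw [Option.mem_def, f.eq_some_iff] at ha hb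
  by_contra hab
  push_neg at hab
  have hyx := hf b a y x (by simp [hb]) (by simp [ha]) (le_of_lt hab)
  have hxy' : x = y := le_antisymm hxy hyx
  subst hxy'
  have h1 : x ∈ f a := Option.mem_def.2 ha
  have h2 : x ∈ f b := Option.mem_def.2 hb
  have : a = b := PEquiv.inj f h1 h2
  omega

theorem IOZ_symm {f : ℤ ≃. ℤ} (hf : IOZ f) : IOZ f.symm :=
  ⟨PMono_symm hf.1, by rw [PDom_symm]; exact hf.2.2, by rw [PRan_symm]; exact hf.2.1⟩

theorem PMono_trans {f g : ℤ ≃. ℤ} (hf : PMono f) (hg : PMono g) : PMono (f.trans g) := by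
  intro x y a b ha hb hxy
  rw [Option.mem_def, trans_eq_some] at ha hb
  obtain ⟨u, hu, hu2⟩ := ha
  obtain ⟨v, hv, hv2⟩ := hb
  exact hg u v a b (by simp [hu2]) (by simp [hv2]) (hf x y u v (by simp [hu]) (by simp [hv]) hxy)

theorem PDom_trans_cofinite {f g : ℤ ≃. ℤ} (hf : (PDom f)ᶜ.Finite) (hg : (PDom g)ᶜ.Finite) :
    (PDom (f.trans g))ᶜ.Finite := by
  apply Set.Finite.subset (hf.union (hg.image (fun y => (f.symm y).getD 0)))
  intro x hx
  rw [Set.mem_compl_iff, mem_PDom_iff] at hx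
  push_neg at hx
  rcases hfx : f x with _ | y
  · exact Or.inl (by rw [Set.mem_compl_iff, mem_PDom_iff]; push_neg; intro y; simp [hfx])
  · right
    have hgy : g y = none := by
      rcases hgy : g y with _ | z
      · rfl
      · exact absurd (by simp [hfx, hgy]) (hx z)
    refine ⟨y, ?_, ?_⟩
    · rw [Set.mem_compl_iff, mem_PDom_iff]; push_neg; intro z; simp [hgy]
    · show (f.symm y).getD 0 = x
      rw [(f.eq_some_iff).2 hfx]; rfl

theorem IOZ_trans {f g : ℤ ≃. ℤ} (hf : IOZ f) (hg : IOZ g) : IOZ (f.trans g) := by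
  refine ⟨PMono_trans hf.1 hg.1, PDom_trans_cofinite hf.2.1 hg.2.1, ?_⟩
  have : PRan (f.trans g) = PDom (g.symm.trans f.symm) := by
    rw [← PDom_symm, symm_trans_rev]
  rw [this]
  exact PDom_trans_cofinite (by rw [PDom_symm]; exact hg.2.2) (by rw [PDom_symm]; exact hf.2.2)
theorem self_trans_symm_pid (f : ℤ ≃. ℤ) : f.trans f.symm = pid (PDom f) := by
  apply PEquiv.ext; intro x
  rcases hfx : f x with _ | y
  · have : x ∉ PDom f := by rw [mem_PDom_iff]; push_neg; intro y; simp [hfx]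
    simp [hfx, this]
  · have hx : x ∈ PDom f := mem_PDom_iff.2 ⟨y, hfx⟩
    have : f.symm y = some x := (f.eq_some_iff).2 hfx
    simp [hfx, this, hx]

theorem symm_trans_self_pid (f : ℤ ≃. ℤ) : f.symm.trans f = pid (PRan f) := by
  have := self_trans_symm_pid f.symm
  rwa [symm_symm, PDom_symm] at this

theorem trans_pid_of_ran_subset {f : ℤ ≃. ℤ} {s : Set ℤ} (h : PRan f ⊆ s) :
    f.trans (pid s) = f := by
  apply PEquiv.ext; intro x
  rcases hfx : f x with _ | y
  · simp [hfx]
  · have : y ∈ s := h (mem_PRan_iff.2 ⟨x, hfx⟩)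
    simp [hfx, this]

theorem pid_trans_of_dom_subset {f : ℤ ≃. ℤ} {s : Set ℤ} (h : PDom f ⊆ s) :
    (pid s).trans f = f := by
  apply PEquiv.ext; intro x
  by_cases hx : x ∈ s
  · simp [hx]
  · have : x ∉ PDom f := fun hd => hx (h hd)
    rw [mem_PDom_iff] at this; push_neg at this
    rcases hfx : f x with _ | y
    · simp [hx, hfx]
    · exact absurd hfx (this y)

theorem PRan_trans_subset (f g : ℤ ≃. ℤ) : PRan (f.trans g) ⊆ PRan g := by
  intro y hy
  rw [mem_PRan_iff] at hy ⊢
  obtain ⟨x, hx⟩ := hy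
  rw [trans_apply', Option.bind_eq_some_iff] at hx
  obtain ⟨b, _, hb2⟩ := hx
  exact ⟨b, hb2⟩

theorem PDom_trans_subset (f g : ℤ ≃. ℤ) : PDom (f.trans g) ⊆ PDom f := by
  intro x hx
  rw [mem_PDom_iff] at hx ⊢
  obtain ⟨y, hy⟩ := hx
  rw [trans_apply', Option.bind_eq_some_iff] at hy
  obtain ⟨b, hb, _⟩ := hy
  exact ⟨b, hb⟩

/-- idempotents are partial identities -/
theorem idem_eq_pid {f : ℤ ≃. ℤ} (h : f.trans f = f) : f = pid (PDom f) := by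
  apply PEquiv.ext; intro x
  rcases hfx : f x with _ | y
  · have : x ∉ PDom f := by rw [mem_PDom_iff]; push_neg; intro y; simp [hfx]
    simp [this]
  · have htr : (f.trans f) x = some y := by rw [h]; exact hfx
    rw [trans_apply', hfx, Option.bind_some] at htr
    -- htr : f y = some y
    have : x = y := PEquiv.inj f (Option.mem_def.2 hfx) (Option.mem_def.2 htr)
    subst this
    have hx : x ∈ PDom f := mem_PDom_iff.2 ⟨x, hfx⟩
    simp [hx, hfx]

theorem total_trans_symm {x : ℤ ≃. ℤ} (htot : ∀ z, ∃ w, x z = some w) :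
    x.trans x.symm = PEquiv.refl ℤ := by
  rw [self_trans_symm_pid, ← pid_univ]
  congr 1
  rw [Set.eq_univ_iff_forall]
  intro z
  exact mem_PDom_iff.2 (htot z)

theorem conj_pid {x : ℤ ≃. ℤ} (htot : ∀ z, ∃ w, x z = some w) (U : Set ℤ) :
    (x.trans (pid U)).trans x.symm = pid {z | ∃ y, x z = some y ∧ y ∈ U} := by
  apply PEquiv.ext; intro z
  obtain ⟨w, hw⟩ := htot z
  have hsym : x.symm w = some z := (x.eq_some_iff).2 hw
  by_cases hwU : w ∈ U
  · have hz : z ∈ {z | ∃ y, x z = some y ∧ y ∈ U} := ⟨w, hw, hwU⟩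
    simp [hw, hwU, hsym, hz]
  · have hz : z ∉ {z | ∃ y, x z = some y ∧ y ∈ U} := by
      rintro ⟨y, hy, hyU⟩
      rw [hw] at hy; cases hy; exact hwU hyU
    simp [hw, hwU, hz]

theorem preimage_cofinite {x : ℤ ≃. ℤ} (htot : ∀ z, ∃ w, x z = some w) {U : Set ℤ}
    (hU : Uᶜ.Finite) : {z | ∃ y, x z = some y ∧ y ∈ U}ᶜ.Finite := by
  apply Set.Finite.subset (hU.image (fun y => (x.symm y).getD 0))
  intro z hz
  rw [Set.mem_compl_iff, Set.mem_setOf_eq] at hz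
  push_neg at hz
  obtain ⟨w, hw⟩ := htot z
  refine ⟨w, hz w hw, ?_⟩
  show (x.symm w).getD 0 = z
  rw [(x.eq_some_iff).2 hw]; rfl

theorem IOZ_of_total {x : ℤ ≃. ℤ} (htot : ∀ z, ∃ w, x z = some w) (hm : PMono x)
    (hr : (PRan x)ᶜ.Finite) : IOZ x := by
  refine ⟨hm, ?_, hr⟩
  have : PDom x = Set.univ := Set.eq_univ_iff_forall.2 (fun z => mem_PDom_iff.2 (htot z))
  rw [this, Set.compl_univ]
  exact Set.finite_empty
/-- the monotone total injection skipping the value `b`. -/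
noncomputable def shiftAt (b : ℤ) : ℤ ≃. ℤ where
  toFun z := some (if z < b then z else z + 1)
  invFun y := if y = b then none else some (if y < b then y else y - 1)
  inv z y := by
    split_ifs with h1 h2 h2 <;>
      simp only [Option.mem_def, Option.some.injEq, reduceCtorEq, false_iff,
        not_false_iff] <;> omega

theorem shiftAt_apply (b z : ℤ) : shiftAt b z = some (if z < b then z else z + 1) := rfl
theorem shiftAt_symm_apply (b y : ℤ) :
    (shiftAt b).symm y = if y = b then none else some (if y < b then y else y - 1) := rfl

theorem shiftAt_total (b : ℤ) : ∀ z, ∃ w, shiftAt b z = some w := fun z => ⟨_, rfl⟩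

theorem shiftAt_mono (b : ℤ) : PMono (shiftAt b) := by
  intro x y u v hu hv hxy
  simp only [Option.mem_def, shiftAt_apply, Option.some.injEq] at hu hv
  split_ifs at hu hv <;> omega

theorem PRan_shiftAt (b : ℤ) : PRan (shiftAt b) = {b}ᶜ := by
  ext y
  simp only [PRan, Set.mem_setOf_eq, Set.mem_compl_iff, Set.mem_singleton_iff]
  rw [shiftAt_symm_apply]
  split_ifs with h <;> simp [h]

/-- translation by c -/
noncomputable def tshift (c : ℤ) : ℤ ≃. ℤ where
  toFun z := some (z + c)
  invFun y := some (y - c)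
  inv z y := by
    simp only [Option.mem_def, Option.some.injEq]
    omega

theorem tshift_apply (c z : ℤ) : tshift c z = some (z + c) := rfl
theorem tshift_total (c : ℤ) : ∀ z, ∃ w, tshift c z = some w := fun z => ⟨_, rfl⟩
theorem tshift_mono (c : ℤ) : PMono (tshift c) := by
  intro x y u v hu hv hxy
  simp only [Option.mem_def, tshift_apply, Option.some.injEq] at hu hv
  omega
theorem PRan_tshift (c : ℤ) : PRan (tshift c) = Set.univ := by
  ext y
  simp only [PRan, Set.mem_setOf_eq, Set.mem_univ, iff_true]
  exact rfl

/-- There is a total monotone injection with range the complement of any finite set. -/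
theorem emb_exists (F : Finset ℤ) :
    ∃ x : ℤ ≃. ℤ, (∀ z, ∃ w, x z = some w) ∧ PMono x ∧ PRan x = (↑F : Set ℤ)ᶜ := by
  classical
  induction F using Finset.induction_on with
  | empty =>
    refine ⟨PEquiv.refl ℤ, fun z => ⟨z, rfl⟩, ?_, ?_⟩
    · intro x y u v hu hv hxy
      simp only [Option.mem_def, refl_apply, Option.some.injEq] at hu hv
      omega
    · ext y
      simp only [PRan, Set.mem_setOf_eq, symm_refl, refl_apply, Option.isSome_some,
        Finset.coe_empty, Set.compl_empty, Set.mem_univ]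
  | @insert a F ha ih =>
    obtain ⟨x, htot, hm, hr⟩ := ih
    have haR : a ∈ PRan x := by rw [hr]; simp [ha]
    rw [PRan, Set.mem_setOf_eq, Option.isSome_iff_exists] at haR
    obtain ⟨b, hb⟩ := haR
    have hxb : x b = some a := (x.eq_some_iff).1 hb
    refine ⟨(shiftAt b).trans x, ?_, PMono_trans (shiftAt_mono b) hm, ?_⟩
    · intro z
      obtain ⟨w, hw⟩ := shiftAt_total b z
      obtain ⟨v, hv⟩ := htot w
      exact ⟨v, by simp [hw, hv]⟩
    · ext y
      rw [← PDom_symm, symm_trans_rev]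
      rw [mem_PDom_iff]
      constructor
      · rintro ⟨z, hz⟩
        rw [trans_apply', Option.bind_eq_some_iff] at hz
        obtain ⟨w, hw1, hw2⟩ := hz
        have hxy : x w = some y := (x.eq_some_iff).1 hw1
        have hwb : w ≠ b := by
          intro h; subst h
          rw [shiftAt_symm_apply] at hw2; simp at hw2
        have hyF : y ∈ (↑F : Set ℤ)ᶜ := by rw [← hr]; exact mem_PRan_iff.2 ⟨w, hxy⟩
        have hya : y ≠ a := by
          intro h; subst h
          exact hwb (PEquiv.inj x (Option.mem_def.2 hxy) (Option.mem_def.2 hxb))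
        simp only [Finset.coe_insert, Set.compl_eq_univ_diff] at *
        simp only [Set.mem_diff, Set.mem_univ, true_and] at hyF ⊢
        simp [hya, hyF]
      · intro hy
        simp only [Finset.coe_insert, Set.mem_compl_iff, Finset.coe_insert,
          Set.mem_insert_iff] at hy
        push_neg at hy
        obtain ⟨hya, hyF⟩ := hy
        have : y ∈ PRan x := by rw [hr]; simpa using hyF
        rw [mem_PRan_iff] at this
        obtain ⟨w, hw⟩ := this
        have hwb : w ≠ b := by
          intro h; subst h
          rw [hxb] at hw; cases hw; exact hya rfl
        have : (shiftAt b).symm w = some (if w < b then w else w - 1) := by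
          rw [shiftAt_symm_apply, if_neg hwb]
        refine ⟨(if w < b then w else w - 1), ?_⟩
        rw [trans_apply', (x.eq_some_iff).2 hw, Option.bind_some, this]
theorem IOZn_mulN {n : ℕ} {α β : Fin n → ℤ ≃. ℤ} (hα : IOZn n α) (hβ : IOZn n β) :
    IOZn n (mulN α β) := fun i => IOZ_trans (hα i) (hβ i)

theorem IOZn_epsT {n : ℕ} {i : Fin n} {ε : ℤ ≃. ℤ} (hε : IOZ ε) : IOZn n (epsT i ε) := by
  intro j
  unfold epsT
  split
  · exact hε
  · exact IOZ_refl

theorem IOZn_oneN (n : ℕ) : IOZn n (oneN n) := fun _ => IOZ_refl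

theorem IOZn_pidN {n : ℕ} {S : Fin n → Set ℤ} (hS : ∀ j, (S j)ᶜ.Finite) :
    IOZn n (fun j => pid (S j)) := fun j => IOZ_pid (hS j)

/-- Range lemma: from α ρ β we get pid(ran α) ρ pid(ran α ∩ ran β). -/
theorem ranLemma {n : ℕ} {ρ : (Fin n → ℤ ≃. ℤ) → (Fin n → ℤ ≃. ℤ) → Prop}
    (hρ : IsCongOn n ρ) {α β : Fin n → ℤ ≃. ℤ} (hα : IOZn n α) (hβ : IOZn n β)
    (hab : ρ α β) :
    ρ (fun j => pid (PRan (α j))) (fun j => pid (PRan (α j) ∩ PRan (β j))) := by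
  obtain ⟨hrefl, hsymm, htrans, hcomp⟩ := hρ
  set γ := fun j => (α j).symm with hγdef
  have hγ : IOZn n γ := fun j => IOZ_symm (hα j)
  have r1 := (hcomp α β γ hα hβ hγ hab).2
  set δ := fun j => pid (PRan (β j)) with hδdef
  have hδ : IOZn n δ := fun j => IOZ_pid ((hβ j).2.2)
  have hγα : IOZn n (mulN γ α) := IOZn_mulN hγ hα
  have hγβ : IOZn n (mulN γ β) := IOZn_mulN hγ hβ
  have r2 := (hcomp (mulN γ α) (mulN γ β) δ hγα hγβ hδ r1).1
  have e1 : mulN γ α = fun j => pid (PRan (α j)) := funext fun j => symm_trans_self_pid (α j)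
  have e2 : mulN (mulN γ α) δ = fun j => pid (PRan (α j) ∩ PRan (β j)) := by
    funext j
    show (((α j).symm.trans (α j)).trans (pid (PRan (β j)))) = _
    rw [symm_trans_self_pid, pid_trans_pid]
  have e3 : mulN (mulN γ β) δ = mulN γ β := by
    funext j
    exact trans_pid_of_ran_subset (PRan_trans_subset _ _)
  rw [e2, e3] at r2
  rw [e1] at r1
  have h1 : IOZn n (fun j => pid (PRan (α j))) := IOZn_pidN (fun j => (hα j).2.2)
  have h2 : IOZn n (fun j => pid (PRan (α j) ∩ PRan (β j))) :=
    IOZn_pidN (fun j => by rw [Set.compl_inter]; exact ((hα j).2.2).union ((hβ j).2.2))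
  exact htrans _ _ _ h1 hγβ h2 r1 (hsymm _ _ h2 hγβ r2)

/-- Domain lemma: from α ρ β we get pid(dom α) ρ pid(dom β ∩ dom α). -/
theorem domLemma {n : ℕ} {ρ : (Fin n → ℤ ≃. ℤ) → (Fin n → ℤ ≃. ℤ) → Prop}
    (hρ : IsCongOn n ρ) {α β : Fin n → ℤ ≃. ℤ} (hα : IOZn n α) (hβ : IOZn n β)
    (hab : ρ α β) :
    ρ (fun j => pid (PDom (α j))) (fun j => pid (PDom (β j) ∩ PDom (α j))) := by
  obtain ⟨hrefl, hsymm, htrans, hcomp⟩ := hρ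
  set γ := fun j => (α j).symm with hγdef
  have hγ : IOZn n γ := fun j => IOZ_symm (hα j)
  have r1 := (hcomp α β γ hα hβ hγ hab).1
  set δ := fun j => pid (PDom (β j)) with hδdef
  have hδ : IOZn n δ := fun j => IOZ_pid ((hβ j).2.1)
  have hαγ : IOZn n (mulN α γ) := IOZn_mulN hα hγ
  have hβγ : IOZn n (mulN β γ) := IOZn_mulN hβ hγ
  have r2 := (hcomp (mulN α γ) (mulN β γ) δ hαγ hβγ hδ r1).2
  have e1 : mulN α γ = fun j => pid (PDom (α j)) := funext fun j => self_trans_symm_pid (α j)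
  have e2 : mulN δ (mulN α γ) = fun j => pid (PDom (β j) ∩ PDom (α j)) := by
    funext j
    show (pid (PDom (β j))).trans ((α j).trans (α j).symm) = _
    rw [self_trans_symm_pid, pid_trans_pid]
  have e3 : mulN δ (mulN β γ) = mulN β γ := by
    funext j
    exact pid_trans_of_dom_subset (PDom_trans_subset _ _)
  rw [e2, e3] at r2
  rw [e1] at r1
  have h1 : IOZn n (fun j => pid (PDom (α j))) := IOZn_pidN (fun j => (hα j).2.1)
  have h2 : IOZn n (fun j => pid (PDom (β j) ∩ PDom (α j))) :=
    IOZn_pidN (fun j => by rw [Set.compl_inter]; exact ((hβ j).2.1).union ((hα j).2.1))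
  exact htrans _ _ _ h1 hβγ h2 r1 (hsymm _ _ h2 hβγ r2)
/-- Separation: from α ρ β with α i ≠ β i, produce related partial-identity tuples
differing at coordinate i (with a witness point in S i \ T i). -/
theorem sepLemma {n : ℕ} {ρ : (Fin n → ℤ ≃. ℤ) → (Fin n → ℤ ≃. ℤ) → Prop}
    (hρ : IsCongOn n ρ) {α β : Fin n → ℤ ≃. ℤ} (hα : IOZn n α) (hβ : IOZn n β)
    (hab : ρ α β) (i : Fin n) (hnei : α i ≠ β i) :
    ∃ S T : Fin n → Set ℤ, (∀ j, (S j)ᶜ.Finite) ∧ (∀ j, (T j)ᶜ.Finite) ∧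
      ρ (fun j => pid (S j)) (fun j => pid (T j)) ∧ ∃ p, p ∈ S i ∧ p ∉ T i := by
  have hsymm := hρ.2.1
  have hcomp := hρ.2.2.2
  obtain ⟨x, hx⟩ : ∃ x, α i x ≠ β i x := by
    by_contra h; push_neg at h; exact hnei (PEquiv.ext h)
  rcases hax : α i x with _ | p
  · rcases hbx : β i x with _ | q
    · rw [hax, hbx] at hx; exact absurd rfl hx
    · -- α undefined, β defined at x : domain lemma applied to (β, α)
      have hba : ρ β α := hsymm α β hα hβ hab
      refine ⟨fun j => PDom (β j), fun j => PDom (α j) ∩ PDom (β j),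
        fun j => (hβ j).2.1,
        fun j => by rw [Set.compl_inter]; exact ((hα j).2.1).union ((hβ j).2.1),
        domLemma hρ hβ hα hba, x, mem_PDom_iff.2 ⟨q, hbx⟩, ?_⟩
      rintro ⟨hxa, -⟩
      obtain ⟨y, hy⟩ := mem_PDom_iff.1 hxa
      rw [hax] at hy; cases hy
  · rcases hbx : β i x with _ | q
    · -- α defined, β undefined at x : domain lemma applied to (α, β)
      refine ⟨fun j => PDom (α j), fun j => PDom (β j) ∩ PDom (α j),
        fun j => (hα j).2.1,
        fun j => by rw [Set.compl_inter]; exact ((hβ j).2.1).union ((hα j).2.1),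
        domLemma hρ hα hβ hab, x, mem_PDom_iff.2 ⟨p, hax⟩, ?_⟩
      rintro ⟨hxb, -⟩
      obtain ⟨y, hy⟩ := mem_PDom_iff.1 hxb
      rw [hbx] at hy; cases hy
    · -- both defined, p ≠ q
      have hpq : p ≠ q := by
        intro h; rw [hax, hbx, h] at hx; exact hx rfl
      rcases hbp : (β i).symm p with _ | x'
      · -- p not in range of β i : range lemma directly
        refine ⟨fun j => PRan (α j), fun j => PRan (α j) ∩ PRan (β j),
          fun j => (hα j).2.2,
          fun j => by rw [Set.compl_inter]; exact ((hα j).2.2).union ((hβ j).2.2),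
          ranLemma hρ hα hβ hab, p, mem_PRan_iff.2 ⟨x, hax⟩, ?_⟩
        rintro ⟨-, hpb⟩
        rw [PRan, Set.mem_setOf_eq, hbp] at hpb
        simp at hpb
      · -- p in range of β i via x' ≠ x : restrict domains at x' first
        have hbx' : β i x' = some p := (β i).eq_some_iff.1 hbp
        have hx'x : x ≠ x' := by
          intro h; rw [h, hbx'] at hbx; cases hbx; exact hpq rfl
        set lam := epsT i (pid ({x'}ᶜ)) with hlamdef
        have hlam : IOZn n lam := IOZn_epsT (IOZ_pid (by simp))
        have r : ρ (mulN lam α) (mulN lam β) := (hcomp α β lam hα hβ hlam hab).2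
        have hlama : IOZn n (mulN lam α) := IOZn_mulN hlam hα
        have hlamb : IOZn n (mulN lam β) := IOZn_mulN hlam hβ
        have hlami : lam i = pid ({x'}ᶜ) := by rw [hlamdef]; unfold epsT; rw [if_pos rfl]
        refine ⟨fun j => PRan (mulN lam α j), fun j => PRan (mulN lam α j) ∩ PRan (mulN lam β j),
          fun j => (hlama j).2.2,
          fun j => by rw [Set.compl_inter]; exact ((hlama j).2.2).union ((hlamb j).2.2),
          ranLemma hρ hlama hlamb r, p, ?_, ?_⟩
        · refine mem_PRan_iff.2 ⟨x, ?_⟩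
          show ((lam i).trans (α i)) x = some p
          rw [hlami, trans_apply', pid_apply, if_pos (by simpa using hx'x), Option.bind_some, hax]
        · rintro ⟨-, hpb⟩
          obtain ⟨z, hz⟩ := mem_PRan_iff.1 hpb
          rw [show mulN lam β i = (lam i).trans (β i) from rfl, hlami, trans_apply'] at hz
          rw [Option.bind_eq_some_iff] at hz
          obtain ⟨w, hw1, hw2⟩ := hz
          rw [pid_eq_some_iff] at hw1
          obtain ⟨rfl, hzs⟩ := hw1
          have : z = x' := PEquiv.inj (β i) (Option.mem_def.2 hw2) (Option.mem_def.2 hbx')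
          exact hzs (by simpa using this)
/-- From a finite complement set produce a total monotone PEquiv with range the given
cofinite set. -/
theorem emb_exists' {A : Set ℤ} (hA : Aᶜ.Finite) :
    ∃ x : ℤ ≃. ℤ, (∀ z, ∃ w, x z = some w) ∧ PMono x ∧ PRan x = A := by
  obtain ⟨x, htot, hm, hr⟩ := emb_exists hA.toFinset
  refine ⟨x, htot, hm, ?_⟩
  rw [hr, Set.Finite.coe_toFinset, compl_compl]

/-- Conjugation lemma: squash related pid-tuples to (𝕀, proper idempotent at i). -/
theorem conjLemma {n : ℕ} {ρ : (Fin n → ℤ ≃. ℤ) → (Fin n → ℤ ≃. ℤ) → Prop}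
    (hρ : IsCongOn n ρ) {S T : Fin n → Set ℤ} (hS : ∀ j, (S j)ᶜ.Finite)
    (hT : ∀ j, (T j)ᶜ.Finite)
    (hrel : ρ (fun j => pid (S j)) (fun j => pid (T j)))
    (i : Fin n) (p : ℤ) (hpS : p ∈ S i) (hpT : p ∉ T i) :
    ∃ V : Set ℤ, Vᶜ.Finite ∧ V ≠ Set.univ ∧ ρ (oneN n) (epsT i (pid V)) := by
  have hcomp := hρ.2.2.2
  have hch : ∀ j : Fin n, ∃ x : ℤ ≃. ℤ, (∀ z, ∃ w, x z = some w) ∧ PMono x ∧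
      PRan x = (if j = i then S i else S j ∩ T j) := by
    intro j
    split_ifs with h
    · exact emb_exists' (hS i)
    · exact emb_exists' (by rw [Set.compl_inter]; exact (hS j).union (hT j))
  choose χ htot hmono hran using hch
  have hχ : IOZn n χ := fun j => IOZ_of_total (htot j) (hmono j)
    (by rw [hran j]; split_ifs with h
        · exact hS i
        · rw [Set.compl_inter]; exact (hS j).union (hT j))
  have hχinv : IOZn n (fun j => (χ j).symm) := fun j => IOZ_symm (hχ j)
  have hpidS : IOZn n (fun j => pid (S j)) := IOZn_pidN hS
  have hpidT : IOZn n (fun j => pid (T j)) := IOZn_pidN hT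
  have r1 : ρ (mulN χ (fun j => pid (S j))) (mulN χ (fun j => pid (T j))) :=
    (hcomp _ _ χ hpidS hpidT hχ hrel).2
  have r2 := (hcomp _ _ (fun j => (χ j).symm) (IOZn_mulN hχ hpidS) (IOZn_mulN hχ hpidT)
    hχinv r1).1
  set V : Set ℤ := {z | ∃ y, χ i z = some y ∧ y ∈ T i} with hVdef
  have eL : mulN (mulN χ (fun j => pid (S j))) (fun j => (χ j).symm) = oneN n := by
    funext j
    show ((χ j).trans (pid (S j))).trans (χ j).symm = PEquiv.refl ℤ
    have hsub : PRan (χ j) ⊆ S j := by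
      rw [hran j]; split_ifs with h
      · subst h; exact le_refl _
      · exact Set.inter_subset_left
    rw [trans_pid_of_ran_subset hsub]
    exact total_trans_symm (htot j)
  have eR : mulN (mulN χ (fun j => pid (T j))) (fun j => (χ j).symm) = epsT i (pid V) := by
    funext j
    show ((χ j).trans (pid (T j))).trans (χ j).symm = epsT i (pid V) j
    rw [conj_pid (htot j) (T j)]
    unfold epsT
    split_ifs with h
    · subst h; rfl
    · have : {z | ∃ y, χ j z = some y ∧ y ∈ T j} = Set.univ := by
        rw [Set.eq_univ_iff_forall]
        intro z
        obtain ⟨w, hw⟩ := htot j z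
        refine ⟨w, hw, ?_⟩
        have : w ∈ PRan (χ j) := mem_PRan_iff.2 ⟨z, hw⟩
        rw [hran j, if_neg h] at this
        exact this.2
      rw [this, pid_univ]
  rw [eL, eR] at r2
  have hpRan : p ∈ PRan (χ i) := by rw [hran i, if_pos rfl]; exact hpS
  obtain ⟨z₀, hz₀⟩ := mem_PRan_iff.1 hpRan
  have hz₀V : z₀ ∉ V := by
    rintro ⟨y, hy1, hy2⟩
    rw [hz₀] at hy1; cases hy1; exact hpT hy2
  refine ⟨V, preimage_cofinite (htot i) (hT i), ?_, r2⟩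
  intro h
  rw [h] at hz₀V
  exact hz₀V (Set.mem_univ z₀)

/-- Generic conjugation of an established relation 𝕀 ρ ε_i°(pid U). -/
theorem conjStep {n : ℕ} {ρ : (Fin n → ℤ ≃. ℤ) → (Fin n → ℤ ≃. ℤ) → Prop}
    (hρ : IsCongOn n ρ) {i : Fin n} {U : Set ℤ} (hU : Uᶜ.Finite)
    {x : ℤ ≃. ℤ} (htot : ∀ z, ∃ w, x z = some w) (hm : PMono x) (hr : (PRan x)ᶜ.Finite)
    (h : ρ (oneN n) (epsT i (pid U))) :
    ρ (oneN n) (epsT i (pid {z | ∃ y, x z = some y ∧ y ∈ U})) := by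
  have hcomp := hρ.2.2.2
  have hx : IOZ x := IOZ_of_total htot hm hr
  have hχ : IOZn n (epsT i x) := IOZn_epsT hx
  have hχinv : IOZn n (epsT i x.symm) := IOZn_epsT (IOZ_symm hx)
  have hone : IOZn n (oneN n) := IOZn_oneN n
  have hepsU : IOZn n (epsT i (pid U)) := IOZn_epsT (IOZ_pid hU)
  have r1 : ρ (mulN (epsT i x) (oneN n)) (mulN (epsT i x) (epsT i (pid U))) :=
    (hcomp _ _ _ hone hepsU hχ h).2
  have r2 := (hcomp _ _ (epsT i x.symm) (IOZn_mulN hχ hone) (IOZn_mulN hχ hepsU)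
    hχinv r1).1
  have eL : mulN (mulN (epsT i x) (oneN n)) (epsT i x.symm) = oneN n := by
    funext j
    show ((epsT i x j).trans (PEquiv.refl ℤ)).trans (epsT i x.symm j) = PEquiv.refl ℤ
    unfold epsT
    split_ifs with h'
    · rw [trans_refl]; exact total_trans_symm htot
    · rw [trans_refl, refl_trans]
  have eR : mulN (mulN (epsT i x) (epsT i (pid U))) (epsT i x.symm) =
      epsT i (pid {z | ∃ y, x z = some y ∧ y ∈ U}) := by
    funext j
    show ((epsT i x j).trans (epsT i (pid U) j)).trans (epsT i x.symm j) = _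
    unfold epsT
    split_ifs with h'
    · exact conj_pid htot U
    · rw [trans_refl, refl_trans]
  rw [eL, eR] at r2
  exact r2

/-- multiplying two relations 𝕀 ρ η. -/
theorem mulLemma {n : ℕ} {ρ : (Fin n → ℤ ≃. ℤ) → (Fin n → ℤ ≃. ℤ) → Prop}
    (hρ : IsCongOn n ρ) {η η' : Fin n → ℤ ≃. ℤ} (hη : IOZn n η) (hη' : IOZn n η')
    (h : ρ (oneN n) η) (h' : ρ (oneN n) η') : ρ (oneN n) (mulN η η') := by
  have hcomp := hρ.2.2.2
  have htrans := hρ.2.2.1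
  have hone : IOZn n (oneN n) := IOZn_oneN n
  have r1 : ρ (mulN η (oneN n)) (mulN η η') := (hcomp _ _ η hone hη' hη h').2
  have e1 : mulN η (oneN n) = η := by
    funext j; exact trans_refl (η j)
  rw [e1] at r1
  exact htrans _ _ _ hone hη (IOZn_mulN hη hη') h r1
theorem epsT_refl {n : ℕ} (i : Fin n) : epsT i (PEquiv.refl ℤ) = oneN n := by
  funext j; unfold epsT oneN; split <;> rfl

theorem epsT_mul {n : ℕ} (i : Fin n) (f g : ℤ ≃. ℤ) :
    mulN (epsT i f) (epsT i g) = epsT i (f.trans g) := by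
  funext j
  show (epsT i f j).trans (epsT i g j) = epsT i (f.trans g) j
  unfold epsT
  split_ifs with h
  · rfl
  · rw [trans_refl]

theorem shapeLemma {n : ℕ} {ρ : (Fin n → ℤ ≃. ℤ) → (Fin n → ℤ ≃. ℤ) → Prop}
    (hρ : IsCongOn n ρ) {i : Fin n} {V : Set ℤ} (hV : Vᶜ.Finite) (hVne : V ≠ Set.univ)
    (h : ρ (oneN n) (epsT i (pid V))) :
    ∀ W : Set ℤ, Wᶜ.Finite → ρ (oneN n) (epsT i (pid W)) := by
  obtain ⟨m, hm⟩ := (Set.ne_univ_iff_exists_notMem V).1 hVne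
  -- first, a single hole at some point z₀
  obtain ⟨x, htot, hmono, hran⟩ := emb_exists' (A := (Vᶜ \ {m})ᶜ)
    (by rw [compl_compl]; exact hV.subset Set.diff_subset)
  have hxr : (PRan x)ᶜ.Finite := by
    rw [hran, compl_compl]; exact hV.subset Set.diff_subset
  have hmem : m ∈ PRan x := by rw [hran]; simp
  obtain ⟨z₀, hz₀⟩ := mem_PRan_iff.1 hmem
  have h1 := conjStep hρ hV htot hmono hxr h
  have hV' : {z | ∃ y, x z = some y ∧ y ∈ V} = ({z₀} : Set ℤ)ᶜ := by
    ext z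
    simp only [Set.mem_setOf_eq, Set.mem_compl_iff, Set.mem_singleton_iff]
    constructor
    · rintro ⟨y, hy1, hy2⟩ rfl
      rw [hz₀] at hy1; cases hy1; exact hm hy2
    · intro hz
      obtain ⟨y, hy⟩ := htot z
      refine ⟨y, hy, ?_⟩
      have hyR : y ∈ PRan x := mem_PRan_iff.2 ⟨z, hy⟩
      rw [hran] at hyR
      rw [Set.mem_compl_iff, Set.mem_diff] at hyR
      by_contra hyV
      have : y = m := by
        by_contra hym
        exact hyR ⟨hyV, hym⟩
      subst this
      exact hz (PEquiv.inj x (Option.mem_def.2 hy) (Option.mem_def.2 hz₀))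
  rw [hV'] at h1
  -- now every singleton hole
  have hsing : ∀ w : ℤ, ρ (oneN n) (epsT i (pid ({w} : Set ℤ)ᶜ)) := by
    intro w
    have hc : (({z₀} : Set ℤ)ᶜ)ᶜ.Finite := by rw [compl_compl]; exact Set.finite_singleton _
    have h2 := conjStep hρ hc (tshift_total (z₀ - w)) (tshift_mono (z₀ - w))
      (by rw [PRan_tshift, Set.compl_univ]; exact Set.finite_empty) h1
    have : {z | ∃ y, tshift (z₀ - w) z = some y ∧ y ∈ ({z₀} : Set ℤ)ᶜ} = ({w} : Set ℤ)ᶜ := by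
      ext z
      simp only [Set.mem_setOf_eq, tshift_apply, Option.some.injEq, Set.mem_compl_iff,
        Set.mem_singleton_iff]
      constructor
      · rintro ⟨y, rfl, hy⟩; omega
      · intro hz; exact ⟨z + (z₀ - w), rfl, by omega⟩
    rwa [this] at h2
  -- finite unions of holes
  have hfin : ∀ F : Finset ℤ, ρ (oneN n) (epsT i (pid ((↑F : Set ℤ)ᶜ))) := by
    intro F
    induction F using Finset.induction_on with
    | empty =>
      rw [show ((↑(∅ : Finset ℤ) : Set ℤ))ᶜ = Set.univ by simp, pid_univ, epsT_refl]
      exact hρ.1 _ (IOZn_oneN n)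
    | @insert a F ha ih =>
      have h3 := mulLemma hρ (IOZn_epsT (IOZ_pid (by simp)))
        (IOZn_epsT (IOZ_pid (by rw [compl_compl]; exact F.finite_toSet))) (hsing a) ih
      rw [epsT_mul, pid_trans_pid] at h3
      have : ({a} : Set ℤ)ᶜ ∩ (↑F : Set ℤ)ᶜ = ((↑(insert a F) : Set ℤ))ᶜ := by
        rw [Finset.coe_insert, Set.insert_eq, Set.compl_union]
      rwa [this] at h3
  intro W hW
  have : W = ((↑hW.toFinset : Set ℤ))ᶜ := by rw [Set.Finite.coe_toFinset, compl_compl]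
  rw [this]
  exact hfin _
/-- if α ≠ β are 𝔠-equivalent then 𝕀 𝔠 ε for EVERY idempotent ε with
D(𝕀,ε) = D(α,β). -/
theorem stmt15 (n : ℕ) (ρ : (Fin n → ℤ ≃. ℤ) → (Fin n → ℤ ≃. ℤ) → Prop)
    (hρ : IsCongOn n ρ) (α β : Fin n → ℤ ≃. ℤ) (hα : IOZn n α) (hβ : IOZn n β)
    (hab : ρ α β) (hne : α ≠ β) :
    ∀ ε : Fin n → ℤ ≃. ℤ, IOZn n ε → IsIdemN ε → Dset (oneN n) ε = Dset α β →
      ρ (oneN n) ε := by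
  intro ε hε hidem hD
  have hcoord : ∀ i : Fin n, ρ (oneN n) (epsT i (ε i)) := by
    intro i
    by_cases hi : ε i = PEquiv.refl ℤ
    · rw [hi, epsT_refl]; exact hρ.1 _ (IOZn_oneN n)
    · have hiD : i ∈ Dset (oneN n) ε := by
        show oneN n i ≠ ε i
        exact fun h => hi h.symm
      rw [hD] at hiD
      have hnei : α i ≠ β i := hiD
      obtain ⟨S, T, hS, hT, hrel, p, hpS, hpT⟩ := sepLemma hρ hα hβ hab i hnei
      obtain ⟨V, hV, hVne, hrelV⟩ := conjLemma hρ hS hT hrel i p hpS hpT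
      have hW := shapeLemma hρ hV hVne hrelV (PDom (ε i)) ((hε i).2.1)
      have hεi : ε i = pid (PDom (ε i)) := idem_eq_pid (hidem i)
      rw [hεi]
      exact hW
  have key : ∀ s : Finset (Fin n),
      ρ (oneN n) (fun j => if j ∈ s then ε j else PEquiv.refl ℤ) := by
    intro s
    induction s using Finset.induction_on with
    | empty =>
      have e : (fun j => if j ∈ (∅ : Finset (Fin n)) then ε j else PEquiv.refl ℤ) = oneN n := by
        funext j; simp [oneN]
      rw [e]
      exact hρ.1 _ (IOZn_oneN n)
    | @insert i s hi ih =>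
      have hη' : IOZn n (fun j => if j ∈ s then ε j else PEquiv.refl ℤ) := by
        intro j
        dsimp only
        split
        · exact hε j
        · exact IOZ_refl
      have h3 := mulLemma hρ (IOZn_epsT (hε i)) hη' (hcoord i) ih
      have e : mulN (epsT i (ε i)) (fun j => if j ∈ s then ε j else PEquiv.refl ℤ) =
          (fun j => if j ∈ insert i s then ε j else PEquiv.refl ℤ) := by
        funext j
        show (epsT i (ε i) j).trans
          ((fun j => if j ∈ s then ε j else PEquiv.refl ℤ) j) = _
        unfold epsT
        dsimp only
        by_cases hj : j = i
        · subst hj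
          rw [if_pos rfl, if_neg hi, trans_refl, if_pos (Finset.mem_insert_self j s)]
        · rw [if_neg hj, refl_trans]
          by_cases hjs : j ∈ s
          · rw [if_pos hjs, if_pos (Finset.mem_insert_of_mem hjs)]
          · rw [if_neg hjs, if_neg (by simp [hj, hjs])]
      rwa [e] at h3
  have := key Finset.univ
  have e : (fun j => if j ∈ (Finset.univ : Finset (Fin n)) then ε j else PEquiv.refl ℤ) = ε := by
    funext j; simp
  rwa [e] at this
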